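/- arXiv:2504.02189 — 4 statements merged into one kernel-verified Lean document; each statement's English description precedes it below -/
import Mathlib

section
/- For the two-particle Calogero–Moser system, let G₁ = q₁ + q₂ and G₂ = (q₁−q₂)(p₁−p₂). Then {G₁,G₂} = 0, {F₁,G₁} = −2, {F₂,G₁} = −2F₁, {F₁,G₂} = 0, and {F₂,G₂} = 2F₁² − 4F₂, where F₁ = p₁+p₂ and F₂ = p₁²+p₂²+2g²/(q₁−q₂)². -/
abbrev Phase2 := (Fin 2 → ℝ) × (Fin 2 → ℝ)

/-- Poisson bracket on `ℝ⁴` with coordinates `(q₁,q₂,p₁,p₂)`. -/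
noncomputable def poisson (F G : Phase2 → ℝ) (x : Phase2) : ℝ :=
  ∑ i : Fin 2,
    (fderiv ℝ F x (Pi.single i 1, 0) * fderiv ℝ G x (0, Pi.single i 1)
      - fderiv ℝ G x (Pi.single i 1, 0) * fderiv ℝ F x (0, Pi.single i 1))

noncomputable def Lq (i : Fin 2) : Phase2 →L[ℝ] ℝ :=
  (ContinuousLinearMap.proj i).comp (ContinuousLinearMap.fst ℝ (Fin 2 → ℝ) (Fin 2 → ℝ))

noncomputable def Lp (i : Fin 2) : Phase2 →L[ℝ] ℝ :=
  (ContinuousLinearMap.proj i).comp (ContinuousLinearMap.snd ℝ (Fin 2 → ℝ) (Fin 2 → ℝ))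

lemma hq (i : Fin 2) (x : Phase2) : HasFDerivAt (fun y : Phase2 => y.1 i) (Lq i) x :=
  (Lq i).hasFDerivAt

lemma hp (i : Fin 2) (x : Phase2) : HasFDerivAt (fun y : Phase2 => y.2 i) (Lp i) x :=
  (Lp i).hasFDerivAt

lemma poisson_eq {F G : Phase2 → ℝ} {Lf Lg : Phase2 →L[ℝ] ℝ} {x : Phase2}
    (hF : HasFDerivAt F Lf x) (hG : HasFDerivAt G Lg x) :
    poisson F G x = ∑ i : Fin 2,
      (Lf (Pi.single i 1, 0) * Lg (0, Pi.single i 1)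
        - Lg (Pi.single i 1, 0) * Lf (0, Pi.single i 1)) := by
  rw [poisson, hF.fderiv, hG.fderiv]

@[simp] lemma Lq_apply (i : Fin 2) (v : Phase2) : Lq i v = v.1 i := rfl
@[simp] lemma Lp_apply (i : Fin 2) (v : Phase2) : Lp i v = v.2 i := rfl

/-- Poisson brackets of `G₁ = q₁+q₂`, `G₂ = (q₁−q₂)(p₁−p₂)` with the
Calogero–Moser integrals `F₁, F₂` on the region `q₁ ≠ q₂`. -/
theorem stmt_10 (g : ℝ) (F₁ F₂ G₁ G₂ : Phase2 → ℝ)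
    (hF₁def : F₁ = fun x => x.2 0 + x.2 1)
    (hF₂def : F₂ = fun x => (x.2 0) ^ 2 + (x.2 1) ^ 2
      + 2 * g ^ 2 / (x.1 0 - x.1 1) ^ 2)
    (hG₁def : G₁ = fun x => x.1 0 + x.1 1)
    (hG₂def : G₂ = fun x => (x.1 0 - x.1 1) * (x.2 0 - x.2 1)) :
    ∀ x : Phase2, x.1 0 ≠ x.1 1 →
      poisson G₁ G₂ x = 0 ∧
      poisson F₁ G₁ x = -2 ∧
      poisson F₂ G₁ x = -2 * F₁ x ∧
      poisson F₁ G₂ x = 0 ∧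
      poisson F₂ G₂ x = 2 * (F₁ x) ^ 2 - 4 * F₂ x := by
  intro x hx
  have hsub : x.1 0 - x.1 1 ≠ 0 := sub_ne_zero.mpr hx
  have hsq : (x.1 0 - x.1 1) ^ 2 ≠ 0 := pow_ne_zero _ hsub
  subst hF₁def hF₂def hG₁def hG₂def
  have hF1 : HasFDerivAt (fun y : Phase2 => y.2 0 + y.2 1) (Lp 0 + Lp 1) x :=
    (hp 0 x).add (hp 1 x)
  have hG1 : HasFDerivAt (fun y : Phase2 => y.1 0 + y.1 1) (Lq 0 + Lq 1) x :=
    (hq 0 x).add (hq 1 x)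
  have hG2 : HasFDerivAt (fun y : Phase2 => (y.1 0 - y.1 1) * (y.2 0 - y.2 1))
      ((x.1 0 - x.1 1) • (Lp 0 - Lp 1) + (x.2 0 - x.2 1) • (Lq 0 - Lq 1)) x :=
    ((hq 0 x).sub (hq 1 x)).mul ((hp 0 x).sub (hp 1 x))
  have hc : HasDerivAt (fun t : ℝ => 2 * g ^ 2 / t ^ 2)
      ((0 * (x.1 0 - x.1 1) ^ 2 - 2 * g ^ 2 * (2 * (x.1 0 - x.1 1) ^ 1))
        / ((x.1 0 - x.1 1) ^ 2) ^ 2) (x.1 0 - x.1 1) :=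
    (hasDerivAt_const _ _).div (hasDerivAt_pow 2 _) hsq
  have hF2 : HasFDerivAt (fun y : Phase2 => (y.2 0) ^ 2 + (y.2 1) ^ 2
      + 2 * g ^ 2 / (y.1 0 - y.1 1) ^ 2)
      (((2 * (x.2 0) ^ 1) • Lp 0 + (2 * (x.2 1) ^ 1) • Lp 1)
        + ((0 * (x.1 0 - x.1 1) ^ 2 - 2 * g ^ 2 * (2 * (x.1 0 - x.1 1) ^ 1))
            / ((x.1 0 - x.1 1) ^ 2) ^ 2) • (Lq 0 - Lq 1)) x := by
    have h := (((hasDerivAt_pow 2 (x.2 0)).comp_hasFDerivAt x (hp 0 x)).add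
      ((hasDerivAt_pow 2 (x.2 1)).comp_hasFDerivAt x (hp 1 x))).add
      (hc.comp_hasFDerivAt x ((hq 0 x).sub (hq 1 x)))
    refine h.congr_fderiv ?_
    norm_num
  have e0 : (Pi.single (0 : Fin 2) 1 : Fin 2 → ℝ) 0 = 1 := by simp
  have e1 : (Pi.single (0 : Fin 2) 1 : Fin 2 → ℝ) 1 = 0 := by simp
  have e2 : (Pi.single (1 : Fin 2) 1 : Fin 2 → ℝ) 0 = 0 := by simp
  have e3 : (Pi.single (1 : Fin 2) 1 : Fin 2 → ℝ) 1 = 1 := by simp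
  refine ⟨?_, ?_, ?_, ?_, ?_⟩
  · rw [poisson_eq hG1 hG2, Fin.sum_univ_two]
    simp [e0, e1, e2, e3]
  · rw [poisson_eq hF1 hG1, Fin.sum_univ_two]
    simp [e0, e1, e2, e3]
    norm_num
  · rw [poisson_eq hF2 hG1, Fin.sum_univ_two]
    simp [e0, e1, e2, e3]
    ring
  · rw [poisson_eq hF1 hG2, Fin.sum_univ_two]
    simp [e0, e1, e2, e3]
  · rw [poisson_eq hF2 hG2, Fin.sum_univ_two]
    simp [e0, e1, e2, e3]
    field_simp
    ring
end

section
/- The Jacobian determinant of the map (q₁,q₂,p₁,p₂) ↦ (F₁,F₂,G₁,G₂), where F₁ = p₁+p₂, F₂ = p₁²+p₂²+2g²/(q₁−q₂)², G₁ = q₁+q₂, G₂ = (q₁−q₂)(p₁−p₂), equals 4(p₁−p₂)² + 16g²/(q₁−q₂)², which is nonzero whenever q₁ ≠ q₂ and g ≠ 0. -/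
/-- Coordinate directions `(∂/∂q₁, ∂/∂q₂, ∂/∂p₁, ∂/∂p₂)` of `ℝ⁴`. -/
noncomputable def coordDir : Fin 4 → Phase2 :=
  ![(Pi.single 0 1, 0), (Pi.single 1 1, 0), (0, Pi.single 0 1), (0, Pi.single 1 1)]


private theorem det_fin_four' (M : Matrix (Fin 4) (Fin 4) ℝ) :
    M.det =
      M 0 0 * M 1 1 * M 2 2 * M 3 3 - M 0 0 * M 1 1 * M 2 3 * M 3 2 -
        M 0 0 * M 1 2 * M 2 1 * M 3 3 + M 0 0 * M 1 2 * M 2 3 * M 3 1 +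
        M 0 0 * M 1 3 * M 2 1 * M 3 2 - M 0 0 * M 1 3 * M 2 2 * M 3 1 -
        M 0 1 * M 1 0 * M 2 2 * M 3 3 + M 0 1 * M 1 0 * M 2 3 * M 3 2 +
        M 0 1 * M 1 2 * M 2 0 * M 3 3 - M 0 1 * M 1 2 * M 2 3 * M 3 0 -
        M 0 1 * M 1 3 * M 2 0 * M 3 2 + M 0 1 * M 1 3 * M 2 2 * M 3 0 +
        M 0 2 * M 1 0 * M 2 1 * M 3 3 - M 0 2 * M 1 0 * M 2 3 * M 3 1 -
        M 0 2 * M 1 1 * M 2 0 * M 3 3 + M 0 2 * M 1 1 * M 2 3 * M 3 0 +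
        M 0 2 * M 1 3 * M 2 0 * M 3 1 - M 0 2 * M 1 3 * M 2 1 * M 3 0 -
        M 0 3 * M 1 0 * M 2 1 * M 3 2 + M 0 3 * M 1 0 * M 2 2 * M 3 1 +
        M 0 3 * M 1 1 * M 2 0 * M 3 2 - M 0 3 * M 1 1 * M 2 2 * M 3 0 -
        M 0 3 * M 1 2 * M 2 0 * M 3 1 + M 0 3 * M 1 2 * M 2 1 * M 3 0 := by
  rw [Matrix.det_succ_row_zero, Fin.sum_univ_four]
  norm_num [Matrix.det_fin_three, Matrix.submatrix_apply, Fin.succAbove, Fin.lt_def,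
    Fin.succ_zero_eq_one, Fin.succ_one_eq_two, show (2 : Fin 3).succ = 3 by rfl,
    show (1 : Fin 3).succ = 2 by rfl, show (0 : Fin 3).succ = 1 by rfl, show ((3 : Fin 4) : ℕ) = 3 by rfl,
    show Fin.castSucc (2 : Fin 3) = (2 : Fin 4) by rfl, show ((2 : Fin 4) : ℕ) = 2 by rfl,
    show ((1 : Fin 4) : ℕ) = 1 by rfl, show ((0 : Fin 4) : ℕ) = 0 by rfl,
    show Fin.castSucc (1 : Fin 3) = (1 : Fin 4) by rfl,
    show Fin.castSucc (0 : Fin 3) = (0 : Fin 4) by rfl]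
  ring

/-- The Jacobian determinant of `(q₁,q₂,p₁,p₂) ↦ (F₁,F₂,G₁,G₂)` equals
`4(p₁−p₂)² + 16g²/(q₁−q₂)²`, nonzero when `q₁ ≠ q₂` and `g ≠ 0`. -/
theorem stmt_11 (g : ℝ) (F₁ F₂ G₁ G₂ : Phase2 → ℝ)
    (hF₁def : F₁ = fun x => x.2 0 + x.2 1)
    (hF₂def : F₂ = fun x => (x.2 0) ^ 2 + (x.2 1) ^ 2
      + 2 * g ^ 2 / (x.1 0 - x.1 1) ^ 2)
    (hG₁def : G₁ = fun x => x.1 0 + x.1 1)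
    (hG₂def : G₂ = fun x => (x.1 0 - x.1 1) * (x.2 0 - x.2 1))
    (J : Phase2 → Matrix (Fin 4) (Fin 4) ℝ)
    (hJdef : J = fun x => Matrix.of fun i j =>
      fderiv ℝ (![F₁, F₂, G₁, G₂] i) x (coordDir j)) :
    ∀ x : Phase2, x.1 0 ≠ x.1 1 →
      (J x).det = 4 * (x.2 0 - x.2 1) ^ 2 + 16 * g ^ 2 / (x.1 0 - x.1 1) ^ 2 ∧
      (g ≠ 0 → (J x).det ≠ 0) := by
  intro x hx
  have hd : x.1 0 - x.1 1 ≠ 0 := sub_ne_zero.mpr hx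
  set A : Fin 2 → (Phase2 →L[ℝ] ℝ) := fun i =>
    (ContinuousLinearMap.proj i).comp (ContinuousLinearMap.fst ℝ (Fin 2 → ℝ) (Fin 2 → ℝ))
    with hA
  set B : Fin 2 → (Phase2 →L[ℝ] ℝ) := fun i =>
    (ContinuousLinearMap.proj i).comp (ContinuousLinearMap.snd ℝ (Fin 2 → ℝ) (Fin 2 → ℝ))
    with hB
  have hq : ∀ i, HasFDerivAt (fun y : Phase2 => y.1 i) (A i) x := fun i =>
    (A i).hasFDerivAt
  have hp : ∀ i, HasFDerivAt (fun y : Phase2 => y.2 i) (B i) x := fun i =>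
    (B i).hasFDerivAt
  have hu : HasFDerivAt (fun y : Phase2 => y.1 0 - y.1 1) (A 0 - A 1) x :=
    (hq 0).sub (hq 1)
  have hpow : ∀ (f : Phase2 → ℝ) (D : Phase2 →L[ℝ] ℝ), HasFDerivAt f D x →
      HasFDerivAt (fun y => f y ^ 2) (((2 : ℕ) * f x ^ 1 : ℝ) • D) x := fun f D h =>
    (hasDerivAt_pow 2 (f x)).comp_hasFDerivAt x h
  have hu2 := hpow _ _ hu
  have hinv := ((hasDerivAt_inv (pow_ne_zero 2 hd)).comp_hasFDerivAt x hu2).const_mul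
    (2 * g ^ 2)
  have hF1 : HasFDerivAt F₁ (B 0 + B 1) x := by
    rw [hF₁def]; exact (hp 0).add (hp 1)
  have hF2 : HasFDerivAt F₂
      ((((2 : ℕ) : ℝ) * x.2 0 ^ 1) • B 0 + (((2 : ℕ) : ℝ) * x.2 1 ^ 1) • B 1
        + (2 * g ^ 2) • -(((x.1 0 - x.1 1) ^ 2) ^ 2)⁻¹ •
          ((((2 : ℕ) : ℝ) * (x.1 0 - x.1 1) ^ 1) • (A 0 - A 1))) x := by
    rw [hF₂def]
    exact ((hpow _ _ (hp 0)).add (hpow _ _ (hp 1))).add hinv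
  have hG1 : HasFDerivAt G₁ (A 0 + A 1) x := by
    rw [hG₁def]; exact (hq 0).add (hq 1)
  have hG2 : HasFDerivAt G₂
      ((x.1 0 - x.1 1) • (B 0 - B 1) + (x.2 0 - x.2 1) • (A 0 - A 1)) x := by
    rw [hG₂def]
    exact hu.mul ((hp 0).sub (hp 1))
  have ev : ∀ (f : Phase2 → ℝ) (D : Phase2 →L[ℝ] ℝ), HasFDerivAt f D x →
      ∀ j, fderiv ℝ f x (coordDir j) = D (coordDir j) := by
    intro f D h j; rw [h.fderiv]
  have hJx : J x = !![0, 0, 1, 1;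
      -(4 * g ^ 2) / (x.1 0 - x.1 1) ^ 3, 4 * g ^ 2 / (x.1 0 - x.1 1) ^ 3,
        2 * x.2 0, 2 * x.2 1;
      1, 1, 0, 0;
      x.2 0 - x.2 1, -(x.2 0 - x.2 1), x.1 0 - x.1 1, -(x.1 0 - x.1 1)] := by
    rw [hJdef]
    ext i j
    fin_cases i <;> fin_cases j <;>
      · simp only [Fin.zero_eta, Fin.mk_one, Fin.reduceFinMk, Matrix.of_apply,
          Matrix.cons_val_zero, Matrix.cons_val_one,
          Matrix.head_cons, Matrix.cons_val_two, Matrix.tail_cons, Matrix.cons_val_three,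
          Matrix.cons_val', Matrix.empty_val', Matrix.cons_val_fin_one, Matrix.head_fin_const]
        first
          | rw [ev F₁ _ hF1] | rw [ev F₂ _ hF2] | rw [ev G₁ _ hG1] | rw [ev G₂ _ hG2]
        simp only [hA, hB, coordDir, ContinuousLinearMap.add_apply,
          ContinuousLinearMap.sub_apply, ContinuousLinearMap.smul_apply,
          ContinuousLinearMap.neg_apply, ContinuousLinearMap.comp_apply,
          ContinuousLinearMap.proj_apply, ContinuousLinearMap.coe_fst',
          ContinuousLinearMap.coe_snd', Matrix.cons_val_zero, Matrix.cons_val_one,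
          Matrix.head_cons, Matrix.cons_val_two, Matrix.tail_cons, Matrix.cons_val_three,
          Pi.single_eq_same, Pi.zero_apply, smul_eq_mul, Nat.cast_ofNat]
        simp [Pi.single_apply]
        try field_simp
        try ring
  have key : (J x).det = 4 * (x.2 0 - x.2 1) ^ 2 + 16 * g ^ 2 / (x.1 0 - x.1 1) ^ 2 := by
    rw [hJx, det_fin_four']
    simp only [Matrix.of_apply, Matrix.cons_val', Matrix.cons_val_zero, Matrix.cons_val_one,
      Matrix.cons_val_two, Matrix.cons_val_three, Matrix.head_cons, Matrix.tail_cons,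
      Matrix.empty_val', Matrix.cons_val_fin_one]
    norm_num
    field_simp
    ring
  refine ⟨key, fun hg => ?_⟩
  rw [key]
  have h1 : 0 < 16 * g ^ 2 / (x.1 0 - x.1 1) ^ 2 := by positivity
  have h2 : 0 ≤ 4 * (x.2 0 - x.2 1) ^ 2 := by positivity
  linarith
end

section
/- The curves q₁(t) = C₃t − C₁ + (1/2)√(e^{−4C₄}(t+2C₂)² + 4g²e^{4C₄}), q₂(t) = C₃t − C₁ − (1/2)√(e^{−4C₄}(t+2C₂)² + 4g²e^{4C₄}), p₁(t) = C₃ + (1/2) e^{−4C₄}(t+2C₂)/√(e^{−4C₄}(t+2C₂)² + 4g²e^{4C₄}), p₂(t) = C₃ − (1/2) e^{−4C₄}(t+2C₂)/√(e^{−4C₄}(t+2C₂)² + 4g²e^{4C₄}), with g ≠ 0, solve Hamilton's equations q̇_i = p_i, ṗ₁ = 2g²/(q₁−q₂)³, ṗ₂ = −2g²/(q₁−q₂)³ for the Hamiltonian H = (1/2)(p₁²+p₂²) + g²/(q₁−q₂)². -/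
open Real

/-- The explicit curves solve Hamilton's equations of the two-particle
rational Calogero–Moser system. -/
theorem stmt_12 (g C₁ C₂ C₃ C₄ : ℝ) (hg : g ≠ 0)
    (R q₁ q₂ p₁ p₂ : ℝ → ℝ)
    (hRdef : R = fun t =>
      Real.sqrt (exp (-4 * C₄) * (t + 2 * C₂) ^ 2 + 4 * g ^ 2 * exp (4 * C₄)))
    (hq₁ : q₁ = fun t => C₃ * t - C₁ + 1 / 2 * R t)
    (hq₂ : q₂ = fun t => C₃ * t - C₁ - 1 / 2 * R t)
    (hp₁ : p₁ = fun t => C₃ + 1 / 2 * (exp (-4 * C₄) * (t + 2 * C₂)) / R t)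
    (hp₂ : p₂ = fun t => C₃ - 1 / 2 * (exp (-4 * C₄) * (t + 2 * C₂)) / R t) :
    ∀ t : ℝ,
      HasDerivAt q₁ (p₁ t) t ∧
      HasDerivAt q₂ (p₂ t) t ∧
      HasDerivAt p₁ (2 * g ^ 2 / (q₁ t - q₂ t) ^ 3) t ∧
      HasDerivAt p₂ (-(2 * g ^ 2 / (q₁ t - q₂ t) ^ 3)) t := by
  intro t
  have hE : (0:ℝ) < exp (-4 * C₄) := exp_pos _
  set E := exp (-4 * C₄) with hEdef
  set u : ℝ → ℝ := fun s => E * (s + 2 * C₂) ^ 2 + 4 * g ^ 2 * exp (4 * C₄)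
    with hudef
  have hupos : ∀ s, 0 < u s := by
    intro s
    have : (0:ℝ) < 4 * g ^ 2 * exp (4 * C₄) := by positivity
    have h1 : 0 ≤ E * (s + 2 * C₂) ^ 2 := by positivity
    simp only [hudef]; linarith
  have hR : R = fun s => Real.sqrt (u s) := by rw [hRdef]
  have hRpos : ∀ s, 0 < R s := by
    intro s; rw [hR]; exact Real.sqrt_pos.2 (hupos s)
  have hRsq : ∀ s, R s ^ 2 = u s := by
    intro s; rw [hR]; exact Real.sq_sqrt (hupos s).le
  have hRne : R t ≠ 0 := (hRpos t).ne'
  have hu' : HasDerivAt u (2 * (E * (t + 2 * C₂))) t := by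
    have h := ((((hasDerivAt_id t).add_const (2 * C₂)).pow 2).const_mul
      E).add_const (4 * g ^ 2 * exp (4 * C₄))
    rw [hudef]
    refine h.congr_deriv ?_
    simp only [id, Nat.cast_ofNat]
    ring
  have hR' : HasDerivAt R (E * (t + 2 * C₂) / R t) t := by
    have h := hu'.sqrt (hupos t).ne'
    rw [hR]
    convert h using 1
    show E * (t + 2 * C₂) / Real.sqrt (u t) = _
    rw [mul_comm (2:ℝ) (Real.sqrt (u t)), ← div_div]
    ring
  have hq₁' : HasDerivAt q₁ (p₁ t) t := by
    rw [hq₁, hp₁]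
    have h := (((hasDerivAt_id t).const_mul C₃).sub_const C₁).add (hR'.const_mul (1/2))
    refine h.congr_deriv ?_
    ring
  have hq₂' : HasDerivAt q₂ (p₂ t) t := by
    rw [hq₂, hp₂]
    have h := (((hasDerivAt_id t).const_mul C₃).sub_const C₁).sub (hR'.const_mul (1/2))
    refine h.congr_deriv ?_
    ring
  have hqdiff : q₁ t - q₂ t = R t := by rw [hq₁, hq₂]; ring
  have hkey : E * exp (4 * C₄) = 1 := by
    rw [hEdef, ← Real.exp_add]; norm_num
  have hRcube : 2 * g ^ 2 / (q₁ t - q₂ t) ^ 3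
      = (1 / 2 * E * R t - 1 / 2 * (E * (t + 2 * C₂)) * (E * (t + 2 * C₂) / R t)) / R t ^ 2 := by
    have h2 : R t ^ 2 = E * (t + 2 * C₂) ^ 2 + 4 * g ^ 2 * exp (4 * C₄) := hRsq t
    have hnum : 1 / 2 * E * R t - 1 / 2 * (E * (t + 2 * C₂)) * (E * (t + 2 * C₂) / R t)
        = 2 * g ^ 2 / R t := by
      field_simp
      linear_combination E * h2 + (4 * g ^ 2) * hkey
    rw [hqdiff, hnum]
    field_simp
  have hnum' : HasDerivAt (fun s => 1 / 2 * (E * (s + 2 * C₂))) (1 / 2 * E) t := by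
    have h := (((hasDerivAt_id t).add_const (2 * C₂)).const_mul E).const_mul (1/2)
    refine h.congr_deriv ?_; ring
  have hfrac : HasDerivAt (fun s => 1 / 2 * (E * (s + 2 * C₂)) / R s)
      ((1 / 2 * E * R t - 1 / 2 * (E * (t + 2 * C₂)) * (E * (t + 2 * C₂) / R t)) / R t ^ 2) t :=
    hnum'.div hR' hRne
  have hp₁' : HasDerivAt p₁ (2 * g ^ 2 / (q₁ t - q₂ t) ^ 3) t := by
    rw [hp₁, hRcube]
    exact hfrac.const_add C₃
  have hp₂' : HasDerivAt p₂ (-(2 * g ^ 2 / (q₁ t - q₂ t) ^ 3)) t := by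
    rw [hp₂, hRcube]
    exact (hfrac.const_sub C₃).congr_deriv (by ring)
  exact ⟨hq₁', hq₂', hp₁', hp₂'⟩
end

section
/- Along the explicit Calogero–Moser solution curves, the quantities p₁+p₂, p₁²+p₂²+2g²/(q₁−q₂)², and q₁+q₂ − (p₁+p₂)t are constant in t, and (q₁−q₂)(p₁−p₂) = e^{−4C₄}(t+2C₂) is affine in t. -/
open Real

/-- Along the explicit Calogero–Moser solution curves, `p₁+p₂`,
`p₁²+p₂²+2g²/(q₁−q₂)²` and `q₁+q₂ − (p₁+p₂)t` are constant in `t`,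
and `(q₁−q₂)(p₁−p₂) = e^{−4C₄}(t+2C₂)` is affine in `t`. -/
theorem stmt_13 (g C₁ C₂ C₃ C₄ : ℝ) (hg : g ≠ 0)
    (R q₁ q₂ p₁ p₂ : ℝ → ℝ)
    (hRdef : R = fun t =>
      Real.sqrt (exp (-4 * C₄) * (t + 2 * C₂) ^ 2 + 4 * g ^ 2 * exp (4 * C₄)))
    (hq₁ : q₁ = fun t => C₃ * t - C₁ + 1 / 2 * R t)
    (hq₂ : q₂ = fun t => C₃ * t - C₁ - 1 / 2 * R t)
    (hp₁ : p₁ = fun t => C₃ + 1 / 2 * (exp (-4 * C₄) * (t + 2 * C₂)) / R t)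
    (hp₂ : p₂ = fun t => C₃ - 1 / 2 * (exp (-4 * C₄) * (t + 2 * C₂)) / R t) :
    ∀ t : ℝ,
      p₁ t + p₂ t = p₁ 0 + p₂ 0 ∧
      (p₁ t) ^ 2 + (p₂ t) ^ 2 + 2 * g ^ 2 / (q₁ t - q₂ t) ^ 2
        = (p₁ 0) ^ 2 + (p₂ 0) ^ 2 + 2 * g ^ 2 / (q₁ 0 - q₂ 0) ^ 2 ∧
      q₁ t + q₂ t - (p₁ t + p₂ t) * t = q₁ 0 + q₂ 0 ∧
      (q₁ t - q₂ t) * (p₁ t - p₂ t) = exp (-4 * C₄) * (t + 2 * C₂) := by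
  have hApos : ∀ s : ℝ, 0 < exp (-4 * C₄) * (s + 2 * C₂) ^ 2 + 4 * g ^ 2 * exp (4 * C₄) := by
    intro s; positivity
  have hRpos : ∀ s : ℝ, 0 < R s := by
    intro s; rw [hRdef]; exact Real.sqrt_pos.2 (hApos s)
  have hRsq : ∀ s : ℝ, R s ^ 2 = exp (-4 * C₄) * (s + 2 * C₂) ^ 2 + 4 * g ^ 2 * exp (4 * C₄) := by
    intro s; rw [hRdef]; exact Real.sq_sqrt (hApos s).le
  have key : ∀ s : ℝ, (p₁ s) ^ 2 + (p₂ s) ^ 2 + 2 * g ^ 2 / (q₁ s - q₂ s) ^ 2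
      = 2 * C₃ ^ 2 + exp (-4 * C₄) / 2 := by
    intro s
    have hR := hRsq s
    have hRne := (hRpos s).ne'
    have hAne := (hApos s).ne'
    have hab : exp (-4 * C₄) * exp (4 * C₄) = 1 := by
      rw [← Real.exp_add]; norm_num
    simp only [hq₁, hq₂, hp₁, hp₂]
    rw [show (C₃ * s - C₁ + 1 / 2 * R s) - (C₃ * s - C₁ - 1 / 2 * R s) = R s from by ring]
    rw [show (C₃ + 1 / 2 * (exp (-4 * C₄) * (s + 2 * C₂)) / R s) ^ 2
        + (C₃ - 1 / 2 * (exp (-4 * C₄) * (s + 2 * C₂)) / R s) ^ 2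
        = 2 * C₃ ^ 2 + (exp (-4 * C₄) * (s + 2 * C₂)) ^ 2 / (2 * R s ^ 2) from by
      field_simp; ring]
    rw [hR]
    simp only [neg_mul] at hab ⊢
    field_simp
    linear_combination (-4 * g ^ 2) * hab
  intro t
  have hRnt := (hRpos t).ne'
  have hRn0 := (hRpos 0).ne'
  refine ⟨?_, ?_, ?_, ?_⟩
  · simp only [hp₁, hp₂]; field_simp; ring
  · rw [key t, key 0]
  · simp only [hq₁, hq₂, hp₁, hp₂]; field_simp; ring
  · simp only [hq₁, hq₂, hp₁, hp₂]; field_simp; ring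
end
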